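/- Let $(P_{n,l},P_{n+2,l+1})$ be a link, i.e., $P_{n+2,l+1}(X_1,\dots,X_l,z^{-1}\mid z_1,\dots,z_n,z,-z)=z^{-n-1}\prod_{a=1}^l(1-X_a^2 z^2)P_{n,l}(X_1,\dots,X_l\mid z_1,\dots,z_n)$, where $P_{n,l}$ and $P_{n+2,l+1}$ are skew-symmetric polynomials of the appropriate degrees with symmetric Laurent polynomial coefficients. Then both $P_{n,l}$ and $P_{n+2,l+1}$ are weakly minimal: each vanishes under the specialization $X_{k-1}^{-1}=-X_k^{-1}=z_{N-1}=-z_N$ of its last two $X$-variables and last two $z$-variables. -/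

import Mathlib

private lemma swap_lastTwo {α : Type*} {m : ℕ} (f : Fin m → α) (a b : α) :
    (Fin.snoc (Fin.snoc f a) b : Fin (m + 2) → α) ∘
      (Equiv.swap ((Fin.last m).castSucc) (Fin.last (m + 1))) =
    Fin.snoc (Fin.snoc f b) a := by
  funext i
  simp only [Function.comp_apply]
  induction i using Fin.lastCases with
  | last =>
      rw [Equiv.swap_apply_right]
      simp
  | cast j =>
      induction j using Fin.lastCases with
      | last =>
          rw [Equiv.swap_apply_left]
          simp
      | cast k =>
          have hk := k.isLt
          have h1 : (k.castSucc.castSucc : Fin (m + 2)) ≠ (Fin.last m).castSucc := by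
            simp only [ne_eq, Fin.ext_iff, Fin.coe_castSucc, Fin.val_last]; omega
          have h2 : (k.castSucc.castSucc : Fin (m + 2)) ≠ Fin.last (m + 1) := by
            simp only [ne_eq, Fin.ext_iff, Fin.coe_castSucc, Fin.val_last]; omega
          rw [Equiv.swap_apply_of_ne_of_ne h1 h2]
          simp

theorem stmt12 (l n : ℕ)
    (P : (Fin (l + 2) → ℂ) → (Fin (n + 2) → ℂ) → ℂ)
    (Q : (Fin (l + 3) → ℂ) → (Fin (n + 4) → ℂ) → ℂ)
    (hskewP : ∀ (σ : Equiv.Perm (Fin (l + 2))) Xv z,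
      P (Xv ∘ σ) z = ((Equiv.Perm.sign σ : ℤ) : ℂ) * P Xv z)
    (hskewQ : ∀ (σ : Equiv.Perm (Fin (l + 3))) Xv z,
      Q (Xv ∘ σ) z = ((Equiv.Perm.sign σ : ℤ) : ℂ) * Q Xv z)
    (hsymP : ∀ (σ : Equiv.Perm (Fin (n + 2))) Xv z, P Xv (z ∘ σ) = P Xv z)
    (hsymQ : ∀ (σ : Equiv.Perm (Fin (n + 4))) Xv z, Q Xv (z ∘ σ) = Q Xv z)
    (hlink : ∀ (Xv : Fin (l + 2) → ℂ) (z : Fin (n + 2) → ℂ) (w : ℂ), w ≠ 0 →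
      Q (Fin.snoc Xv w⁻¹) (Fin.snoc (Fin.snoc z w) (-w)) =
        w⁻¹ ^ (n + 3) * (∏ a : Fin (l + 2), (1 - (Xv a) ^ 2 * w ^ 2)) * P Xv z) :
    (∀ (Xv : Fin l → ℂ) (z : Fin n → ℂ) (w : ℂ), w ≠ 0 →
      P (Fin.snoc (Fin.snoc Xv w⁻¹) (-w⁻¹)) (Fin.snoc (Fin.snoc z w) (-w)) = 0) ∧
    (∀ (Xv : Fin (l + 1) → ℂ) (z : Fin (n + 2) → ℂ) (w : ℂ), w ≠ 0 →
      Q (Fin.snoc (Fin.snoc Xv w⁻¹) (-w⁻¹)) (Fin.snoc (Fin.snoc z w) (-w)) = 0) := by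
  constructor
  · -- Part 1: weak minimality of P
    intro Xv z w hw
    -- choose a generic auxiliary point s
    obtain ⟨t, ht⟩ := Infinite.exists_notMem_finset
      ((insert (0 : ℂ) (Finset.image
        (fun a : Fin (l + 2) => (((Fin.snoc (Fin.snoc Xv w⁻¹) (-w⁻¹) : Fin (l + 2) → ℂ) a) ^ 2)⁻¹) Finset.univ)) : Finset ℂ)
    obtain ⟨s, hs⟩ := IsAlgClosed.exists_pow_nat_eq t (n := 2) (by norm_num)
    have hs0 : s ≠ 0 := by
      rintro rfl
      exact ht (by simp [← hs])
    have hC : ∀ a : Fin (l + 2),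
        (1 : ℂ) - ((Fin.snoc (Fin.snoc Xv w⁻¹) (-w⁻¹) : Fin (l + 2) → ℂ) a) ^ 2 * s ^ 2 ≠ 0 := by
      intro a h
      have h1 : ((Fin.snoc (Fin.snoc Xv w⁻¹) (-w⁻¹) : Fin (l + 2) → ℂ) a) ^ 2 * s ^ 2 = 1 := by
        linear_combination -h
      have h2 : (((Fin.snoc (Fin.snoc Xv w⁻¹) (-w⁻¹) : Fin (l + 2) → ℂ) a) ^ 2)⁻¹ = s ^ 2 :=
        inv_eq_of_mul_eq_one_right h1
      exact ht (Finset.mem_insert_of_mem (Finset.mem_image.mpr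
        ⟨a, Finset.mem_univ a, by rw [h2, hs]⟩))
    -- distinctness of the three special indices in Fin (l+3)
    have n01 : ((Fin.last l).castSucc.castSucc : Fin (l + 3)) ≠ (Fin.last (l + 1)).castSucc := by
      simp only [ne_eq, Fin.ext_iff, Fin.coe_castSucc, Fin.val_last]; omega
    have n02 : ((Fin.last l).castSucc.castSucc : Fin (l + 3)) ≠ Fin.last (l + 2) := by
      simp only [ne_eq, Fin.ext_iff, Fin.coe_castSucc, Fin.val_last]; omega
    have n12 : ((Fin.last (l + 1)).castSucc : Fin (l + 3)) ≠ Fin.last (l + 2) := by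
      simp only [ne_eq, Fin.ext_iff, Fin.coe_castSucc, Fin.val_last]; omega
    -- the X-permutation
    have hFG : (Fin.snoc (Fin.snoc (Fin.snoc Xv w⁻¹) (-w⁻¹)) s⁻¹ : Fin (l + 3) → ℂ) ∘
        (Equiv.swap ((Fin.last l).castSucc.castSucc) ((Fin.last (l + 1)).castSucc) *
          Equiv.swap ((Fin.last (l + 1)).castSucc) (Fin.last (l + 2))) =
        Fin.snoc (Fin.snoc (Fin.snoc Xv (-w⁻¹)) s⁻¹) w⁻¹ := by
      funext i
      simp only [Function.comp_apply, Equiv.Perm.mul_apply]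
      induction i using Fin.lastCases with
      | last =>
          rw [Equiv.swap_apply_right, Equiv.swap_apply_right]
          simp
      | cast j =>
        induction j using Fin.lastCases with
        | last =>
            rw [Equiv.swap_apply_left, Equiv.swap_apply_of_ne_of_ne (Ne.symm n02) (Ne.symm n12)]
            simp
        | cast k =>
          induction k using Fin.lastCases with
          | last =>
              rw [Equiv.swap_apply_of_ne_of_ne n01 n02, Equiv.swap_apply_left]
              simp
          | cast m' =>
              have hm := m'.isLt
              have e1 : (m'.castSucc.castSucc.castSucc : Fin (l + 3)) ≠
                  (Fin.last l).castSucc.castSucc := by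
                simp only [ne_eq, Fin.ext_iff, Fin.coe_castSucc, Fin.val_last]; omega
              have e2 : (m'.castSucc.castSucc.castSucc : Fin (l + 3)) ≠
                  (Fin.last (l + 1)).castSucc := by
                simp only [ne_eq, Fin.ext_iff, Fin.coe_castSucc, Fin.val_last]; omega
              have e3 : (m'.castSucc.castSucc.castSucc : Fin (l + 3)) ≠ Fin.last (l + 2) := by
                simp only [ne_eq, Fin.ext_iff, Fin.coe_castSucc, Fin.val_last]; omega
              rw [Equiv.swap_apply_of_ne_of_ne e2 e3, Equiv.swap_apply_of_ne_of_ne e1 e2]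
              simp
    -- sign of the X-permutation is 1
    have hsσ : Equiv.Perm.sign
        (Equiv.swap ((Fin.last l).castSucc.castSucc : Fin (l + 3)) ((Fin.last (l + 1)).castSucc) *
          Equiv.swap ((Fin.last (l + 1)).castSucc) (Fin.last (l + 2))) = 1 := by
      rw [map_mul, Equiv.Perm.sign_swap n01, Equiv.Perm.sign_swap n12]
      simp
    -- distinctness of the four special indices in Fin (n+4)
    have m01 : ((Fin.last n).castSucc.castSucc.castSucc : Fin (n + 4)) ≠
        (Fin.last (n + 1)).castSucc.castSucc := by
      simp only [ne_eq, Fin.ext_iff, Fin.coe_castSucc, Fin.val_last]; omega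
    have m02 : ((Fin.last n).castSucc.castSucc.castSucc : Fin (n + 4)) ≠
        (Fin.last (n + 2)).castSucc := by
      simp only [ne_eq, Fin.ext_iff, Fin.coe_castSucc, Fin.val_last]; omega
    have m03 : ((Fin.last n).castSucc.castSucc.castSucc : Fin (n + 4)) ≠ Fin.last (n + 3) := by
      simp only [ne_eq, Fin.ext_iff, Fin.coe_castSucc, Fin.val_last]; omega
    have m12 : ((Fin.last (n + 1)).castSucc.castSucc : Fin (n + 4)) ≠
        (Fin.last (n + 2)).castSucc := by
      simp only [ne_eq, Fin.ext_iff, Fin.coe_castSucc, Fin.val_last]; omega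
    have m13 : ((Fin.last (n + 1)).castSucc.castSucc : Fin (n + 4)) ≠ Fin.last (n + 3) := by
      simp only [ne_eq, Fin.ext_iff, Fin.coe_castSucc, Fin.val_last]; omega
    have m23 : ((Fin.last (n + 2)).castSucc : Fin (n + 4)) ≠ Fin.last (n + 3) := by
      simp only [ne_eq, Fin.ext_iff, Fin.coe_castSucc, Fin.val_last]; omega
    -- the z-permutation
    have hZZ : (Fin.snoc (Fin.snoc (Fin.snoc (Fin.snoc z w) (-w)) s) (-s) : Fin (n + 4) → ℂ) ∘
        (Equiv.swap ((Fin.last n).castSucc.castSucc.castSucc) ((Fin.last (n + 2)).castSucc) *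
          Equiv.swap ((Fin.last (n + 1)).castSucc.castSucc) (Fin.last (n + 3))) =
        Fin.snoc (Fin.snoc (Fin.snoc (Fin.snoc z s) (-s)) w) (-w) := by
      funext i
      simp only [Function.comp_apply, Equiv.Perm.mul_apply]
      induction i using Fin.lastCases with
      | last =>
          -- i = j3 : inner swap j1 j3 → j1 ; outer swap j0 j2 fixes j1
          rw [Equiv.swap_apply_right, Equiv.swap_apply_of_ne_of_ne (Ne.symm m01) m12]
          simp
      | cast j =>
        induction j using Fin.lastCases with
        | last =>
            -- i = j2 : inner fixes j2 ; outer swap j0 j2 → j0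
            rw [Equiv.swap_apply_of_ne_of_ne (Ne.symm m12) m23, Equiv.swap_apply_right]
            simp
        | cast k =>
          induction k using Fin.lastCases with
          | last =>
              -- i = j1 : inner swap j1 j3 → j3 ; outer fixes j3
              rw [Equiv.swap_apply_left, Equiv.swap_apply_of_ne_of_ne (Ne.symm m03) (Ne.symm m23)]
              simp
          | cast m' =>
            induction m' using Fin.lastCases with
            | last =>
                -- i = j0 : inner fixes j0 ; outer swap j0 j2 → j2
                rw [Equiv.swap_apply_of_ne_of_ne m01 m03, Equiv.swap_apply_left]
                simp
            | cast r =>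
                have hr := r.isLt
                have f0 : (r.castSucc.castSucc.castSucc.castSucc : Fin (n + 4)) ≠
                    (Fin.last n).castSucc.castSucc.castSucc := by
                  simp only [ne_eq, Fin.ext_iff, Fin.coe_castSucc, Fin.val_last]; omega
                have f1 : (r.castSucc.castSucc.castSucc.castSucc : Fin (n + 4)) ≠
                    (Fin.last (n + 1)).castSucc.castSucc := by
                  simp only [ne_eq, Fin.ext_iff, Fin.coe_castSucc, Fin.val_last]; omega
                have f2 : (r.castSucc.castSucc.castSucc.castSucc : Fin (n + 4)) ≠
                    (Fin.last (n + 2)).castSucc := by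
                  simp only [ne_eq, Fin.ext_iff, Fin.coe_castSucc, Fin.val_last]; omega
                have f3 : (r.castSucc.castSucc.castSucc.castSucc : Fin (n + 4)) ≠
                    Fin.last (n + 3) := by
                  simp only [ne_eq, Fin.ext_iff, Fin.coe_castSucc, Fin.val_last]; omega
                rw [Equiv.swap_apply_of_ne_of_ne f1 f3, Equiv.swap_apply_of_ne_of_ne f0 f2]
                simp
    -- skew symmetry step: Q G Ztar = Q Fbig Ztar
    have h := hskewQ
      (Equiv.swap ((Fin.last l).castSucc.castSucc : Fin (l + 3)) ((Fin.last (l + 1)).castSucc) *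
        Equiv.swap ((Fin.last (l + 1)).castSucc) (Fin.last (l + 2)))
      (Fin.snoc (Fin.snoc (Fin.snoc Xv w⁻¹) (-w⁻¹)) s⁻¹)
      (Fin.snoc (Fin.snoc (Fin.snoc (Fin.snoc z s) (-s)) w) (-w))
    rw [hFG, hsσ] at h
    simp only [Units.val_one, Int.cast_one, one_mul] at h
    -- link applied the other way: Q G Ztar = 0
    have h2 := hlink (Fin.snoc (Fin.snoc Xv (-w⁻¹)) s⁻¹) (Fin.snoc (Fin.snoc z s) (-s)) w hw
    have hzero : (1 : ℂ) -
        ((Fin.snoc (Fin.snoc Xv (-w⁻¹)) s⁻¹ : Fin (l + 2) → ℂ) ((Fin.last l).castSucc)) ^ 2 * w ^ 2 = 0 := by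
      rw [Fin.snoc_castSucc, Fin.snoc_last]
      field_simp
      ring
    have hprod : ∏ a : Fin (l + 2),
        ((1 : ℂ) - ((Fin.snoc (Fin.snoc Xv (-w⁻¹)) s⁻¹ : Fin (l + 2) → ℂ) a) ^ 2 * w ^ 2) = 0 :=
      Finset.prod_eq_zero (Finset.mem_univ _) hzero
    rw [hprod] at h2
    simp only [mul_zero, zero_mul] at h2
    -- symmetry step: Q Fbig Ztar = Q Fbig Zbig
    have h3 := hsymQ
      (Equiv.swap ((Fin.last n).castSucc.castSucc.castSucc : Fin (n + 4))
          ((Fin.last (n + 2)).castSucc) *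
        Equiv.swap ((Fin.last (n + 1)).castSucc.castSucc) (Fin.last (n + 3)))
      (Fin.snoc (Fin.snoc (Fin.snoc Xv w⁻¹) (-w⁻¹)) s⁻¹)
      (Fin.snoc (Fin.snoc (Fin.snoc (Fin.snoc z w) (-w)) s) (-s))
    rw [hZZ] at h3
    -- the first way of evaluating
    have h4 := hlink (Fin.snoc (Fin.snoc Xv w⁻¹) (-w⁻¹)) (Fin.snoc (Fin.snoc z w) (-w)) s hs0
    have hQ0 : s⁻¹ ^ (n + 3) *
        (∏ a : Fin (l + 2), ((1 : ℂ) - ((Fin.snoc (Fin.snoc Xv w⁻¹) (-w⁻¹) : Fin (l + 2) → ℂ) a) ^ 2 * s ^ 2)) *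
        P (Fin.snoc (Fin.snoc Xv w⁻¹) (-w⁻¹)) (Fin.snoc (Fin.snoc z w) (-w)) = 0 := by
      rw [← h4, ← h3, ← h, h2]
    rcases mul_eq_zero.mp hQ0 with h5 | h5
    · exact absurd h5 (mul_ne_zero (pow_ne_zero _ (inv_ne_zero hs0))
        (Finset.prod_ne_zero_iff.mpr (fun a _ => hC a)))
    · exact h5
  · -- Part 2: weak minimality of Q
    intro Y z w hw
    have h := hskewQ (Equiv.swap ((Fin.last (l + 1)).castSucc) (Fin.last (l + 2)))
      (Fin.snoc (Fin.snoc Y (-w⁻¹)) w⁻¹) (Fin.snoc (Fin.snoc z w) (-w))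
    rw [swap_lastTwo Y (-w⁻¹) w⁻¹] at h
    rw [hlink (Fin.snoc Y (-w⁻¹)) z w hw] at h
    have hzero : (1 : ℂ) - ((Fin.snoc Y (-w⁻¹) : Fin (l + 2) → ℂ) (Fin.last (l + 1))) ^ 2 * w ^ 2 = 0 := by
      rw [Fin.snoc_last]
      field_simp
      ring
    have hprod : ∏ a : Fin (l + 2), ((1 : ℂ) - ((Fin.snoc Y (-w⁻¹) : Fin (l + 2) → ℂ) a) ^ 2 * w ^ 2) = 0 :=
      Finset.prod_eq_zero (Finset.mem_univ _) hzero
    rw [hprod] at h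
    simpa using h
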